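/- arXiv:1901.04786 — 3 statements merged into one kernel-verified Lean document; each statement's English description precedes it below -/
import Mathlib

section
/- Let C ⊆ ℕ be a cohesive set, let L = (ℕ, ≺) be a computable linear order, and let [ψ] < [φ] be elements of the cohesive power Π_C L. Then the open interval ([ψ], [φ]) in Π_C L is infinite if and only if for every k ∈ ℕ there are infinitely many n ∈ C with ψ(n)↓, φ(n)↓, and the interval {m : ψ(n) ≺ m ≺ φ(n)} in L having at least k elements (i.e., limsup over n ∈ C of the cardinality of (ψ(n), φ(n))_L is infinite). -/
/-- `X ⊆* Y`: `X` is contained in `Y` up to finitely many elements. -/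
def AlmostSubset (X Y : Set ℕ) : Prop := (X \ Y).Finite

/-- `W ⊆ ℕ` is computably enumerable: it is the domain of a partial computable function. -/
def CESet (W : Set ℕ) : Prop := ∃ f : ℕ →. ℕ, Partrec f ∧ W = f.Dom

/-- `W ⊆ ℕ` is computable (decidable). -/
def ComputableSet (W : Set ℕ) : Prop :=
  ∃ f : ℕ → Bool, Computable f ∧ ∀ n, n ∈ W ↔ f n = true

/-- `C ⊆ ℕ` is cohesive: `C` is infinite, and for every c.e. set `W`, either `W ∩ C`
or `Wᶜ ∩ C` is finite. -/
def Cohesive (C : Set ℕ) : Prop :=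
  C.Infinite ∧ ∀ W : Set ℕ, CESet W → (W ∩ C).Finite ∨ (Wᶜ ∩ C).Finite

/-- `C ⊆ ℕ` is r-cohesive. -/
def RCohesive (C : Set ℕ) : Prop :=
  C.Infinite ∧ ∀ W : Set ℕ, ComputableSet W → (W ∩ C).Finite ∨ (Wᶜ ∩ C).Finite

/-- `C` is co-maximal: its complement is maximal, i.e. `C` is cohesive with c.e. complement. -/
def CoMaximal (C : Set ℕ) : Prop := Cohesive C ∧ CESet Cᶜ

/-- A computable (decidable) binary relation on `ℕ`. -/
def ComputableRel (r : ℕ → ℕ → Prop) : Prop :=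
  ∃ f : ℕ → ℕ → Bool, Computable₂ f ∧ ∀ m n, r m n ↔ f m n = true

/-- `y` is the immediate successor of `x` with respect to the strict order `r`. -/
def ImmSucc {α : Type*} (r : α → α → Prop) (x y : α) : Prop :=
  r x y ∧ ∀ z, ¬(r x z ∧ r z y)

/-- A strict order on `ℕ` has order type ω when it is isomorphic to `(ℕ, <)`. -/
def OrderTypeOmega (r : ℕ → ℕ → Prop) : Prop :=
  Nonempty (r ≃r ((· < ·) : ℕ → ℕ → Prop))

/-- Carrier of the cohesive power: partial computable functions whose domain
almost contains `C`. -/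
def CohCarrier (C : Set ℕ) : Type :=
  {φ : ℕ →. ℕ // Partrec φ ∧ (C \ φ.Dom).Finite}

/-- Two partial functions agree (are defined and equal) on almost all of `C`. -/
def eqAE (C : Set ℕ) (φ ψ : ℕ →. ℕ) : Prop :=
  (C \ {n | ∃ a, a ∈ φ n ∧ a ∈ ψ n}).Finite

/-- The equivalence relation underlying the cohesive power. -/
def cohSetoid (C : Set ℕ) : Setoid (CohCarrier C) where
  r φ ψ := eqAE C φ.1 ψ.1
  iseqv := by
    constructor
    · intro φ
      refine φ.2.2.subset fun n hn => ⟨hn.1, fun hd => hn.2 ?_⟩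
      obtain ⟨a, ha⟩ := (PFun.mem_dom _ _).mp hd
      exact ⟨a, ha, ha⟩
    · intro φ ψ h
      exact h.subset fun n hn => ⟨hn.1, fun ⟨a, h1, h2⟩ => hn.2 ⟨a, h2, h1⟩⟩
    · intro φ ψ χ h1 h2
      refine (h1.union h2).subset fun n hn => ?_
      by_cases hmem : ∃ a, a ∈ φ.1 n ∧ a ∈ ψ.1 n
      · obtain ⟨a, ha1, ha2⟩ := hmem
        refine Or.inr ⟨hn.1, fun ⟨b, hb1, hb2⟩ => hn.2 ⟨a, ha1, ?_⟩⟩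
        rwa [Part.mem_unique ha2 hb1]
      · exact Or.inl ⟨hn.1, hmem⟩

/-- The domain of the cohesive power of a computable structure on `ℕ` over `C`. -/
def CohPow (C : Set ℕ) : Type := Quotient (cohSetoid C)

/-- The class of a partial computable function in the cohesive power. -/
def CohPow.mk {C : Set ℕ} (φ : CohCarrier C) : CohPow C := Quotient.mk (cohSetoid C) φ

/-- `φ(n) ≺ ψ(n)` (both defined) for almost all `n ∈ C`. -/
def ltAE (C : Set ℕ) (r : ℕ → ℕ → Prop) (φ ψ : ℕ →. ℕ) : Prop :=
  (C \ {n | ∃ a b, a ∈ φ n ∧ b ∈ ψ n ∧ r a b}).Finite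

/-- The order of the cohesive power of the computable linear order `(ℕ, r)` over `C`. -/
def CohPow.Lt (C : Set ℕ) (r : ℕ → ℕ → Prop) (x y : CohPow C) : Prop :=
  ∃ φ ψ : CohCarrier C, x = CohPow.mk φ ∧ y = CohPow.mk ψ ∧ ltAE C r φ.1 ψ.1

/-- The sum `L₀ + L₁` of two linear orders on `ℕ`, coded on `ℕ` via the computable
pairing `⟨0, l⟩ ↦ 2l`, `⟨1, l⟩ ↦ 2l + 1`. -/
def sumRel (r₀ r₁ : ℕ → ℕ → Prop) (m n : ℕ) : Prop :=
  (m % 2 = 0 ∧ n % 2 = 1) ∨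
  (m % 2 = 0 ∧ n % 2 = 0 ∧ r₀ (m / 2) (n / 2)) ∨
  (m % 2 = 1 ∧ n % 2 = 1 ∧ r₁ (m / 2) (n / 2))

/-- The lexicographic product `L₀ ×ₗ L₁` (first coordinate dominant) of two linear
orders on `ℕ`, coded on `ℕ` via the computable pairing `Nat.pair`. -/
def lexRel (r₀ r₁ : ℕ → ℕ → Prop) (m n : ℕ) : Prop :=
  r₀ m.unpair.1 n.unpair.1 ∨ (m.unpair.1 = n.unpair.1 ∧ r₁ m.unpair.2 n.unpair.2)

/-- The strict order of `ℕ + ℚ ×ₗ ℤ`. -/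
def NQZlt : ℕ ⊕ ℚ × ℤ → ℕ ⊕ ℚ × ℤ → Prop :=
  Sum.Lex (· < ·) (Prod.Lex (· < ·) (· < ·))

/-- The element of the cohesive power represented by the constant function `k`. -/
def constElt (C : Set ℕ) (k : ℕ) : CohPow C :=
  CohPow.mk ⟨fun _ => Part.some k, Partrec.const' (Part.some k), by
    have : (PFun.Dom fun _ : ℕ => Part.some k) = Set.univ := by
      ext n; simp [PFun.Dom]
    rw [this, Set.diff_univ]; exact Set.finite_empty⟩

/-- The element of the cohesive power represented by the identity function. -/
def idElt (C : Set ℕ) : CohPow C :=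
  CohPow.mk ⟨fun n => Part.some n, Partrec.some, by
    have : (PFun.Dom fun n : ℕ => Part.some n) = Set.univ := by
      ext n; simp [PFun.Dom]
    rw [this, Set.diff_univ]; exact Set.finite_empty⟩


-- ## Auxiliary machinery

def cntB (f : ℕ → ℕ → Bool) (a b : ℕ) : ℕ → ℕ
  | 0 => 0
  | m+1 => cntB f a b m + (bif f a m && f m b then 1 else 0)

theorem cntB_computable {f : ℕ → ℕ → Bool} (hf : Computable₂ f) :
    Computable fun x : ℕ × ℕ × ℕ => cntB f x.1 x.2.1 x.2.2 := by
  have h : Computable₂ fun (x : ℕ × ℕ × ℕ) (p : ℕ × ℕ) =>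
      p.2 + (bif f x.1 p.1 && f p.1 x.2.1 then 1 else 0) := by
    have hb1 : Computable fun y : (ℕ × ℕ × ℕ) × ℕ × ℕ => f y.1.1 y.2.1 :=
      hf.comp (Computable.fst.comp Computable.fst) (Computable.fst.comp Computable.snd)
    have hb2 : Computable fun y : (ℕ × ℕ × ℕ) × ℕ × ℕ => f y.2.1 y.1.2.1 :=
      hf.comp (Computable.fst.comp Computable.snd)
        ((Computable.fst.comp Computable.snd).comp Computable.fst)
    have hband : Computable fun y : (ℕ × ℕ × ℕ) × ℕ × ℕ => f y.1.1 y.2.1 && f y.2.1 y.1.2.1 := by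
      have := Computable.cond hb1 hb2 (Computable.const false)
      exact this.of_eq fun y => by cases h1 : f y.1.1 y.2.1 <;> simp [h1]
    have hcond : Computable fun y : (ℕ × ℕ × ℕ) × ℕ × ℕ =>
        (bif f y.1.1 y.2.1 && f y.2.1 y.1.2.1 then 1 else 0 : ℕ) :=
      Computable.cond hband (Computable.const 1) (Computable.const 0)
    exact Primrec.nat_add.to_comp.comp (Computable.snd.comp Computable.snd) hcond
  have := Computable.nat_rec (f := fun x : ℕ × ℕ × ℕ => x.2.2)
    (g := fun _ : ℕ × ℕ × ℕ => (0 : ℕ)) (h := fun x p => p.2 + (bif f x.1 p.1 && f p.1 x.2.1 then 1 else 0))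
    ((Computable.snd.comp Computable.snd)) (Computable.const 0) h
  refine this.of_eq fun x => ?_
  obtain ⟨a, b, m⟩ := x
  induction m with
  | zero => rfl
  | succ m ih => simp only [cntB, ← ih]

theorem cntB_succ (f : ℕ → ℕ → Bool) (a b m : ℕ) :
    cntB f a b (m + 1) = cntB f a b m + (bif f a m && f m b then 1 else 0) := rfl

theorem cntB_mono (f : ℕ → ℕ → Bool) (a b : ℕ) : Monotone (cntB f a b) := by
  apply monotone_nat_of_le_succ
  intro m
  rw [cntB_succ]
  exact Nat.le_add_right _ _

theorem cntB_lt_succ {f : ℕ → ℕ → Bool} {a b x : ℕ} (h : (f a x && f x b) = true) :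
    cntB f a b x < cntB f a b (x + 1) := by
  rw [cntB_succ, h]
  simp

theorem cntB_unique {f : ℕ → ℕ → Bool} {a b x y : ℕ}
    (hx : (f a x && f x b) = true) (hy : (f a y && f y b) = true)
    (h : cntB f a b x = cntB f a b y) : x = y := by
  rcases lt_trichotomy x y with hlt | he | hlt
  · exact absurd (lt_of_lt_of_le (cntB_lt_succ hx) (cntB_mono f a b hlt)) (by omega)
  · exact he
  · exact absurd (lt_of_lt_of_le (cntB_lt_succ hy) (cntB_mono f a b hlt)) (by omega)

theorem cntB_exists_hit {f : ℕ → ℕ → Bool} {a b i : ℕ} {m : ℕ}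
    (h : i + 1 ≤ cntB f a b m) : ∃ x, (f a x && f x b) = true ∧ cntB f a b x = i := by
  induction m with
  | zero => simp [cntB] at h
  | succ m ih =>
    rcases le_or_gt (i+1) (cntB f a b m) with h' | h'
    · exact ih h'
    · rw [cntB_succ] at h
      cases hb : (f a m && f m b) with
      | false => rw [hb] at h; simp at h; omega
      | true => rw [hb] at h; simp at h; exact ⟨m, hb, by omega⟩

theorem cntB_eq_card (f : ℕ → ℕ → Bool) (a b M : ℕ) :
    cntB f a b M = ((Finset.range M).filter fun j => (f a j && f j b) = true).card := by
  induction M with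
  | zero => rfl
  | succ M ih =>
    rw [cntB_succ, Finset.range_add_one, Finset.filter_insert]
    cases hb : (f a M && f M b) with
    | false => simpa [hb] using ih
    | true =>
      simp only [hb, if_true, cond_true]
      rw [Finset.card_insert_of_notMem (by simp)]
      omega

theorem cntB_finset_iff (f : ℕ → ℕ → Bool) (a b k : ℕ) :
    (∃ s : Finset ℕ, k ≤ s.card ∧ ∀ m ∈ s, (f a m && f m b) = true) ↔
      ∃ m, k ≤ cntB f a b m := by
  constructor
  · rintro ⟨s, hk, hs⟩
    refine ⟨s.sup id + 1, le_trans hk ?_⟩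
    rw [cntB_eq_card]
    apply Finset.card_le_card
    intro m hm
    simp only [Finset.mem_filter, Finset.mem_range]
    exact ⟨Nat.lt_succ_of_le (Finset.le_sup (f := id) hm), hs m hm⟩
  · rintro ⟨m, hm⟩
    exact ⟨(Finset.range m).filter fun j => (f a j && f j b) = true,
      by rw [← cntB_eq_card]; exact hm, fun x hx => (Finset.mem_filter.mp hx).2⟩

def srch2 (q : ℕ → ℕ → ℕ → Bool) (ψ φ : ℕ →. ℕ) : ℕ →. ℕ :=
  fun n => (ψ n).bind fun a => (φ n).bind fun b => Nat.rfind fun m => Part.some (q a b m)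

theorem srch2_partrec {q : ℕ → ℕ → ℕ → Bool} {ψ φ : ℕ →. ℕ}
    (hq : Computable fun x : ℕ × ℕ × ℕ => q x.1 x.2.1 x.2.2)
    (hψ : Partrec ψ) (hφ : Partrec φ) : Partrec (srch2 q ψ φ) := by
  apply hψ.bind
  apply Partrec.bind (hφ.comp Computable.fst)
  have hg : Computable fun y : ((ℕ × ℕ) × ℕ) × ℕ => ((y.1.1.2, y.1.2, y.2) : ℕ × ℕ × ℕ) :=
    (Computable.snd.comp (Computable.fst.comp Computable.fst)).pair
      ((Computable.snd.comp Computable.fst).pair Computable.snd)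
  have hc := hq.comp hg
  have h2 : Computable₂ fun (y : (ℕ × ℕ) × ℕ) (m : ℕ) => q y.1.2 y.2 m := hc
  exact Partrec.rfind h2.partrec₂

theorem srch2_mem {q : ℕ → ℕ → ℕ → Bool} {ψ φ : ℕ →. ℕ} {n x : ℕ} :
    x ∈ srch2 q ψ φ n ↔ ∃ a, a ∈ ψ n ∧ ∃ b, b ∈ φ n ∧
      (q a b x = true ∧ ∀ m < x, q a b m = false) := by
  have key : ∀ (p : ℕ → Part Bool) (n : ℕ), n ∈ Nat.rfind p ↔ true ∈ p n ∧ ∀ {m : ℕ}, m < n → false ∈ p m :=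
    fun _ _ => Nat.mem_rfind
  simp only [srch2, Part.mem_bind_iff, key, Part.mem_some_iff]
  constructor
  · rintro ⟨a, ha, b, hb, h1, h2⟩
    exact ⟨a, ha, b, hb, h1.symm, fun m hm => (h2 hm).symm⟩
  · rintro ⟨a, ha, b, hb, h1, h2⟩
    exact ⟨a, ha, b, hb, h1.symm, fun {m} hm => (h2 m hm).symm⟩

theorem srch2_dom {q : ℕ → ℕ → ℕ → Bool} {ψ φ : ℕ →. ℕ} {n : ℕ} :
    (srch2 q ψ φ n).Dom ↔ ∃ a, a ∈ ψ n ∧ ∃ b, b ∈ φ n ∧ ∃ m, q a b m = true := by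
  rw [Part.dom_iff_mem]
  constructor
  · rintro ⟨x, hx⟩
    obtain ⟨a, ha, b, hb, h1, _⟩ := srch2_mem.mp hx
    exact ⟨a, ha, b, hb, x, h1⟩
  · rintro ⟨a, ha, b, hb, m, hm⟩
    classical
    have hex : ∃ m, q a b m = true := ⟨m, hm⟩
    refine ⟨Nat.find hex, srch2_mem.mpr ⟨a, ha, b, hb, Nat.find_spec hex, ?_⟩⟩
    intro j hj
    have := Nat.find_min hex hj
    simpa using this

def srch3 (q : ℕ → ℕ → ℕ → Bool) (ψ φ χ : ℕ →. ℕ) : ℕ →. ℕ :=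
  fun n => (ψ n).bind fun a => (φ n).bind fun b => (χ n).bind fun c =>
    Nat.rfind fun _ => Part.some (q a b c)

theorem srch3_partrec {q : ℕ → ℕ → ℕ → Bool} {ψ φ χ : ℕ →. ℕ}
    (hq : Computable fun x : ℕ × ℕ × ℕ => q x.1 x.2.1 x.2.2)
    (hψ : Partrec ψ) (hφ : Partrec φ) (hχ : Partrec χ) : Partrec (srch3 q ψ φ χ) := by
  apply hψ.bind
  apply Partrec.bind (hφ.comp Computable.fst)
  apply Partrec.bind (hχ.comp (Computable.fst.comp Computable.fst))
  have hg : Computable fun y : (((ℕ × ℕ) × ℕ) × ℕ) × ℕ =>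
      ((y.1.1.1.2, y.1.1.2, y.1.2) : ℕ × ℕ × ℕ) :=
    ((Computable.snd.comp (Computable.fst.comp
        (Computable.fst.comp Computable.fst))).pair
      ((Computable.snd.comp (Computable.fst.comp Computable.fst)).pair
        (Computable.snd.comp Computable.fst)))
  have hc := hq.comp hg
  have h2 : Computable₂ fun (y : ((ℕ × ℕ) × ℕ) × ℕ) (_ : ℕ) => q y.1.1.2 y.1.2 y.2 := hc
  exact Partrec.rfind h2.partrec₂

theorem srch3_dom {q : ℕ → ℕ → ℕ → Bool} {ψ φ χ : ℕ →. ℕ} {n : ℕ} :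
    (srch3 q ψ φ χ n).Dom ↔ ∃ a, a ∈ ψ n ∧ ∃ b, b ∈ φ n ∧ ∃ c, c ∈ χ n ∧ q a b c = true := by
  rw [Part.dom_iff_mem]
  have key : ∀ (p : ℕ → Part Bool) (n : ℕ), n ∈ Nat.rfind p ↔ true ∈ p n ∧ ∀ {m : ℕ}, m < n → false ∈ p m :=
    fun _ _ => Nat.mem_rfind
  simp only [srch3, Part.mem_bind_iff, key, Part.mem_some_iff]
  constructor
  · rintro ⟨x, a, ha, b, hb, c, hc, h1, _⟩
    exact ⟨a, ha, b, hb, c, hc, h1.symm⟩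
  · rintro ⟨a, ha, b, hb, c, hc, h1⟩
    exact ⟨0, a, ha, b, hb, c, hc, h1.symm, fun hm => absurd hm (Nat.not_lt_zero _)⟩

def qI (f : ℕ → ℕ → Bool) (i : ℕ) (a b m : ℕ) : Bool :=
  (f a m && f m b) && decide (cntB f a b m = i)

theorem computable_band {α : Type*} [Primcodable α] {g1 g2 : α → Bool}
    (h1 : Computable g1) (h2 : Computable g2) : Computable fun x => g1 x && g2 x :=
  (Computable.cond h1 h2 (Computable.const false)).of_eq fun x => by
    cases h : g1 x <;> simp [h]

theorem qI_computable {f : ℕ → ℕ → Bool} (hf : Computable₂ f) (i : ℕ) :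
    Computable fun x : ℕ × ℕ × ℕ => qI f i x.1 x.2.1 x.2.2 := by
  have c1 : Computable fun x : ℕ × ℕ × ℕ => f x.1 x.2.2 :=
    hf.comp Computable.fst (Computable.snd.comp Computable.snd)
  have c2 : Computable fun x : ℕ × ℕ × ℕ => f x.2.2 x.2.1 :=
    hf.comp (Computable.snd.comp Computable.snd) (Computable.fst.comp Computable.snd)
  have c3 : Computable fun x : ℕ × ℕ × ℕ => decide (cntB f x.1 x.2.1 x.2.2 = i) := by
    have := (Primrec.eq.decide (α := ℕ)).to_comp.comp (cntB_computable hf)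
      (Computable.const i)
    exact this
  exact computable_band (computable_band c1 c2) c3

theorem qI_true_iff {f : ℕ → ℕ → Bool} {i a b m : ℕ} :
    qI f i a b m = true ↔ (f a m && f m b) = true ∧ cntB f a b m = i := by
  simp [qI]

theorem band_iff {a b : Bool} : (a && b) = true ↔ a = true ∧ b = true := by simp

theorem coh_sub {C W : Set ℕ} (hC : Cohesive C) (hce : CESet W)
    (hinf : (W ∩ C).Infinite) : (C \ W).Finite := by
  rcases hC.2 W hce with h | h
  · exact absurd h hinf
  · have : Wᶜ ∩ C = C \ W := by ext n; simp [Set.mem_diff, Set.mem_inter_iff, and_comm]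
    rwa [this] at h

theorem mk_eq_mk_iff {C : Set ℕ} {α β : CohCarrier C} :
    CohPow.mk α = CohPow.mk β ↔ eqAE C α.1 β.1 :=
  ⟨fun h => Quotient.exact h, fun h => Quotient.sound h⟩

theorem ltAE_of_mk_lt {C : Set ℕ} {r : ℕ → ℕ → Prop} {α β : CohCarrier C}
    (h : CohPow.Lt C r (CohPow.mk α) (CohPow.mk β)) : ltAE C r α.1 β.1 := by
  obtain ⟨α', β', hα, hβ, h⟩ := h
  have hα' : eqAE C α.1 α'.1 := mk_eq_mk_iff.mp hα
  have hβ' : eqAE C β.1 β'.1 := mk_eq_mk_iff.mp hβ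
  refine (Set.Finite.union (Set.Finite.union hα' hβ') h).subset fun n hn => ?_
  by_cases h1 : n ∈ {n | ∃ a, a ∈ α.1 n ∧ a ∈ α'.1 n}
  case neg => exact Or.inl (Or.inl ⟨hn.1, h1⟩)
  by_cases h2 : n ∈ {n | ∃ a, a ∈ β.1 n ∧ a ∈ β'.1 n}
  case neg => exact Or.inl (Or.inr ⟨hn.1, h2⟩)
  by_cases h3 : n ∈ {n | ∃ a b, a ∈ α'.1 n ∧ b ∈ β'.1 n ∧ r a b}
  case neg => exact Or.inr ⟨hn.1, h3⟩
  obtain ⟨x, hx, hx'⟩ := h1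
  obtain ⟨y, hy, hy'⟩ := h2
  obtain ⟨a, b, ha, hb, hr⟩ := h3
  exact absurd ⟨x, y, hx, hy, by rw [Part.mem_unique hx' ha, Part.mem_unique hy' hb]; exact hr⟩ hn.2


def Vset (f : ℕ → ℕ → Bool) (i : ℕ) (ψ φ χ : ℕ →. ℕ) : Set ℕ :=
  {n | ∃ a, a ∈ ψ n ∧ ∃ b, b ∈ φ n ∧ ∃ c, c ∈ χ n ∧ qI f i a b c = true}

def Sset (C : Set ℕ) (f : ℕ → ℕ → Bool) (i : ℕ) (ψ φ : ℕ →. ℕ) : Set (CohPow C) :=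
  {x | ∃ χ : CohCarrier C, x = CohPow.mk χ ∧ (C \ Vset f i ψ φ χ.1).Finite}

theorem Sset_subsingleton (C : Set ℕ) (f : ℕ → ℕ → Bool) (i : ℕ) (ψ φ : ℕ →. ℕ) :
    (Sset C f i ψ φ).Subsingleton := by
  rintro x ⟨χ, hx1, hx2⟩ y ⟨χ', hy1, hy2⟩
  rw [hx1, hy1]
  apply mk_eq_mk_iff.mpr
  refine (Set.Finite.union hx2 hy2).subset fun n hn => ?_
  by_cases hc1 : n ∈ Vset f i ψ φ χ.1
  case neg => exact Or.inl ⟨hn.1, hc1⟩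
  by_cases hc2 : n ∈ Vset f i ψ φ χ'.1
  case neg => exact Or.inr ⟨hn.1, hc2⟩
  obtain ⟨a, ha, b, hb, c, hc, hqc⟩ := hc1
  obtain ⟨a', ha', b', hb', c', hc', hqc'⟩ := hc2
  rw [Part.mem_unique ha' ha, Part.mem_unique hb' hb] at hqc'
  obtain ⟨hp1, he1⟩ := qI_true_iff.mp hqc
  obtain ⟨hp2, he2⟩ := qI_true_iff.mp hqc'
  have : c = c' := cntB_unique hp1 hp2 (he1.trans he2.symm)
  exact absurd ⟨c, hc, this ▸ hc'⟩ hn.2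

/-- The open interval `([ψ], [φ])` in a cohesive power is infinite iff the limsup over
`n ∈ C` of the cardinality of the interval `(ψ(n), φ(n))` is infinite. -/
theorem interval_infinite_iff_limsup (C : Set ℕ) (hC : Cohesive C)
    (r : ℕ → ℕ → Prop) (hcomp : ComputableRel r) (hsto : IsStrictTotalOrder ℕ r)
    (ψ φ : CohCarrier C)
    (hlt : CohPow.Lt C r (CohPow.mk ψ) (CohPow.mk φ)) :
    {x : CohPow C | CohPow.Lt C r (CohPow.mk ψ) x ∧ CohPow.Lt C r x (CohPow.mk φ)}.Infinite ↔
      ∀ k : ℕ, {n | n ∈ C ∧ ∃ a b, a ∈ ψ.1 n ∧ b ∈ φ.1 n ∧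
        ∃ s : Finset ℕ, k ≤ s.card ∧ ∀ m ∈ s, r a m ∧ r m b}.Infinite := by
  obtain ⟨f, hfcomp, hfr⟩ := hcomp
  have hq : ∀ i, Computable fun x : ℕ × ℕ × ℕ => qI f i x.1 x.2.1 x.2.2 :=
    qI_computable hfcomp
  constructor
  · -- interval infinite → limsup infinite
    intro hI
    by_contra hk
    push_neg at hk
    obtain ⟨k, hkf⟩ := hk
    refine absurd hI (Set.not_infinite.mpr ?_)
    refine (Set.Finite.biUnion (Finset.range k).finite_toSet
      (fun i _ => (Sset_subsingleton C f i ψ.1 φ.1).finite)).subset ?_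
    intro x hx
    obtain ⟨χ, hχ⟩ := Quot.exists_rep x
    have hχ' : CohPow.mk χ = x := hχ
    have h1 : ltAE C r ψ.1 χ.1 := ltAE_of_mk_lt (by rw [hχ']; exact hx.1)
    have h2 : ltAE C r χ.1 φ.1 := ltAE_of_mk_lt (by rw [hχ']; exact hx.2)
    have hVce : ∀ i, CESet (Vset f i ψ.1 φ.1 χ.1) := fun i =>
      ⟨srch3 (qI f i) ψ.1 φ.1 χ.1, srch3_partrec (hq i) ψ.2.1 φ.2.1 χ.2.1,
        Set.ext fun n => srch3_dom.symm⟩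
    have hG : (C \ ((C \ {n | ∃ a b, a ∈ ψ.1 n ∧ b ∈ χ.1 n ∧ r a b}) ∪
        (C \ {n | ∃ a b, a ∈ χ.1 n ∧ b ∈ φ.1 n ∧ r a b}) ∪
        {n | n ∈ C ∧ ∃ a b, a ∈ ψ.1 n ∧ b ∈ φ.1 n ∧
          ∃ s : Finset ℕ, k ≤ s.card ∧ ∀ m ∈ s, r a m ∧ r m b})).Infinite :=
      hC.1.diff (Set.Finite.union (Set.Finite.union h1 h2) hkf)
    have hGsub : ∀ n ∈ (C \ ((C \ {n | ∃ a b, a ∈ ψ.1 n ∧ b ∈ χ.1 n ∧ r a b}) ∪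
        (C \ {n | ∃ a b, a ∈ χ.1 n ∧ b ∈ φ.1 n ∧ r a b}) ∪
        {n | n ∈ C ∧ ∃ a b, a ∈ ψ.1 n ∧ b ∈ φ.1 n ∧
          ∃ s : Finset ℕ, k ≤ s.card ∧ ∀ m ∈ s, r a m ∧ r m b})),
        ∃ i < k, n ∈ Vset f i ψ.1 φ.1 χ.1 := by
      intro n hn
      have hnC := hn.1
      have hn1 : n ∈ {n | ∃ a b, a ∈ ψ.1 n ∧ b ∈ χ.1 n ∧ r a b} := by
        by_contra hc; exact hn.2 (Or.inl (Or.inl ⟨hnC, hc⟩))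
      have hn2 : n ∈ {n | ∃ a b, a ∈ χ.1 n ∧ b ∈ φ.1 n ∧ r a b} := by
        by_contra hc; exact hn.2 (Or.inl (Or.inr ⟨hnC, hc⟩))
      have hnT : n ∉ {n | n ∈ C ∧ ∃ a b, a ∈ ψ.1 n ∧ b ∈ φ.1 n ∧
          ∃ s : Finset ℕ, k ≤ s.card ∧ ∀ m ∈ s, r a m ∧ r m b} :=
        fun hc => hn.2 (Or.inr hc)
      obtain ⟨a, c, ha, hc, hrac⟩ := hn1
      obtain ⟨c', b, hc', hb, hrcb⟩ := hn2
      rw [Part.mem_unique hc' hc] at hrcb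
      have hpb : (f a c && f c b) = true :=
        band_iff.mpr ⟨(hfr _ _).mp hrac, (hfr _ _).mp hrcb⟩
      refine ⟨cntB f a b c, ?_, a, ha, b, hb, c, hc, qI_true_iff.mpr ⟨hpb, rfl⟩⟩
      by_contra hge
      push_neg at hge
      refine hnT ⟨hnC, a, b, ha, hb, ?_⟩
      obtain ⟨s, hs1, hs2⟩ := (cntB_finset_iff f a b k).mpr ⟨c, hge⟩
      exact ⟨s, hs1, fun m hm =>
        ⟨(hfr _ _).mpr (band_iff.mp (hs2 m hm)).1,
         (hfr _ _).mpr (band_iff.mp (hs2 m hm)).2⟩⟩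
    have hex : ∃ i, i < k ∧ ((Vset f i ψ.1 φ.1 χ.1) ∩ C).Infinite := by
      by_contra hno
      push_neg at hno
      refine hG ?_
      refine (Set.Finite.biUnion (Finset.range k).finite_toSet
        (fun i hi => hno i (Finset.mem_range.mp hi))).subset ?_
      intro n hn
      obtain ⟨i, hik, hiV⟩ := hGsub n hn
      exact Set.mem_biUnion (Finset.mem_range.mpr hik) ⟨hiV, hn.1⟩
    obtain ⟨i, hik, hiinf⟩ := hex
    have hfinV := coh_sub hC (hVce i) hiinf
    exact Set.mem_biUnion (Finset.mem_range.mpr hik)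
      (⟨χ, hχ'.symm, hfinV⟩ : x ∈ Sset C f i ψ.1 φ.1)
  · -- limsup infinite → interval infinite
    intro h
    have hDfin : ∀ i, (C \ PFun.Dom (srch2 (qI f i) ψ.1 φ.1)).Finite := by
      intro i
      apply coh_sub hC ⟨srch2 (qI f i) ψ.1 φ.1, srch2_partrec (hq i) ψ.2.1 φ.2.1, rfl⟩
      refine (h (i + 1)).mono ?_
      rintro n ⟨hnC, a, b, ha, hb, s, hcard, hs⟩
      refine ⟨?_, hnC⟩
      have hpb : ∀ m ∈ s, (f a m && f m b) = true := fun m hm =>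
        band_iff.mpr ⟨(hfr _ _).mp (hs m hm).1, (hfr _ _).mp (hs m hm).2⟩
      obtain ⟨m, hm⟩ := (cntB_finset_iff f a b (i + 1)).mp ⟨s, hcard, hpb⟩
      obtain ⟨x, hx1, hx2⟩ := cntB_exists_hit hm
      exact srch2_dom.mpr ⟨a, ha, b, hb, x, qI_true_iff.mpr ⟨hx1, hx2⟩⟩
    let ξ : ℕ → CohCarrier C := fun i =>
      ⟨srch2 (qI f i) ψ.1 φ.1, srch2_partrec (hq i) ψ.2.1 φ.2.1, hDfin i⟩
    apply Set.infinite_of_injective_forall_mem (f := fun i => CohPow.mk (ξ i))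
    · intro i j hij
      by_contra hne
      have heq : eqAE C (ξ i).1 (ξ j).1 := mk_eq_mk_iff.mp hij
      obtain ⟨n, hn⟩ := (hC.1.diff heq).nonempty
      have hnS : n ∈ {n | ∃ a, a ∈ (ξ i).1 n ∧ a ∈ (ξ j).1 n} := by
        by_contra hc; exact hn.2 ⟨hn.1, hc⟩
      obtain ⟨v, hvi, hvj⟩ := hnS
      obtain ⟨a, ha, b, hb, hq1, -⟩ := srch2_mem.mp hvi
      obtain ⟨a', ha', b', hb', hq2, -⟩ := srch2_mem.mp hvj
      rw [Part.mem_unique ha' ha, Part.mem_unique hb' hb] at hq2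
      have e1 := (qI_true_iff.mp hq1).2
      have e2 := (qI_true_iff.mp hq2).2
      exact hne (e1 ▸ e2)
    · intro i
      constructor
      · refine ⟨ψ, ξ i, rfl, rfl, ?_⟩
        refine (hDfin i).subset fun n hn => ⟨hn.1, fun hdom => hn.2 ?_⟩
        have hv : ((ξ i).1 n).get hdom ∈ (ξ i).1 n := Part.get_mem hdom
        obtain ⟨a, ha, b, hb, hq1, -⟩ := srch2_mem.mp hv
        exact ⟨a, _, ha, hv,
          (hfr _ _).mpr (band_iff.mp (qI_true_iff.mp hq1).1).1⟩
      · refine ⟨ξ i, φ, rfl, rfl, ?_⟩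
        refine (hDfin i).subset fun n hn => ⟨hn.1, fun hdom => hn.2 ?_⟩
        have hv : ((ξ i).1 n).get hdom ∈ (ξ i).1 n := Part.get_mem hdom
        obtain ⟨a, ha, b, hb, hq1, -⟩ := srch2_mem.mp hv
        exact ⟨_, b, hv, hb,
          (hfr _ _).mpr (band_iff.mp (qI_true_iff.mp hq1).1).2⟩
end

section
/- There exists a computable linear order L = (ℕ, ≺) of order type ω (order-isomorphic to (ℕ, <)) whose successor function (the total function mapping each element to its ≺-immediate successor) is not computable. Moreover, for every noncomputable computably enumerable set A ⊆ ℕ, such an L can be chosen so that membership in A is decidable from the successor function of L (specifically, with the elements of L arranged so that a ∈ A iff the successor of a designated element coding a is not the expected one). -/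
namespace OmegaSuccAux

open Nat.Partrec.Code

variable (c : Nat.Partrec.Code)

/-- `alphaB c s = true` iff, decoding `s = ⟨n, k⟩`, the computation `eval c n` halts
exactly at stage `k + 1`. -/
def alphaB (s : ℕ) : Bool :=
  (evaln (s.unpair.2 + 1) c s.unpair.1).isSome && !(evaln s.unpair.2 c s.unpair.1).isSome

/-- The key function determining the order. -/
def kappa (x : ℕ) : ℕ :=
  if x % 2 = 0 then 3 * (x / 2)
  else if alphaB c (x / 2) then 3 * (x / 2).unpair.1 + 1 else 3 * (x / 2) + 2

/-- Expected successor of the element `2 * a`. -/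
def eFun (a : ℕ) : ℕ := if alphaB c a then 2 * (a + 1) else 2 * a + 1

theorem alphaB_unique {s t : ℕ} (hs : alphaB c s = true) (ht : alphaB c t = true)
    (h : s.unpair.1 = t.unpair.1) : s = t := by
  rw [alphaB, Bool.and_eq_true, Bool.not_eq_true'] at hs ht
  obtain ⟨hs1, hs2⟩ := hs
  obtain ⟨ht1, ht2⟩ := ht
  obtain ⟨xs, hxs⟩ := Option.isSome_iff_exists.mp hs1
  obtain ⟨xt, hxt⟩ := Option.isSome_iff_exists.mp ht1
  have hst : s.unpair.2 = t.unpair.2 := by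
    by_contra hne
    rcases Nat.lt_or_ge s.unpair.2 t.unpair.2 with hlt | hge
    · have hmem : xs ∈ evaln t.unpair.2 c t.unpair.1 := by
        rw [← h]
        exact evaln_mono (Nat.succ_le_of_lt hlt) hxs
      have hB := Option.isSome_iff_exists.mpr ⟨xs, Option.mem_def.mp hmem⟩
      rw [ht2] at hB
      exact absurd hB (by simp)
    · have hlt : t.unpair.2 < s.unpair.2 := lt_of_le_of_ne hge (fun e => hne e.symm)
      have hmem : xt ∈ evaln s.unpair.2 c s.unpair.1 := by
        rw [h]
        exact evaln_mono (Nat.succ_le_of_lt hlt) hxt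
      have hB := Option.isSome_iff_exists.mpr ⟨xt, Option.mem_def.mp hmem⟩
      rw [hs2] at hB
      exact absurd hB (by simp)
  calc s = Nat.pair s.unpair.1 s.unpair.2 := (Nat.pair_unpair s).symm
    _ = Nat.pair t.unpair.1 t.unpair.2 := by rw [h, hst]
    _ = t := Nat.pair_unpair t

theorem dom_iff (n : ℕ) : (eval c n).Dom ↔ ∃ k, alphaB c (Nat.pair n k) = true := by
  constructor
  · intro h
    obtain ⟨x, hx⟩ := Part.dom_iff_mem.mp h
    obtain ⟨k0, hk0⟩ := evaln_complete.mp hx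
    have hex : ∃ m, (evaln m c n).isSome = true :=
      ⟨k0, Option.isSome_iff_exists.mpr ⟨x, hk0⟩⟩
    have hm := Nat.find_spec hex
    have hm0 : Nat.find hex ≠ 0 := by
      intro h0
      rw [h0] at hm
      obtain ⟨y, hy⟩ := Option.isSome_iff_exists.mp hm
      exact absurd (evaln_bound (x := y) hy) (Nat.not_lt_zero n)
    obtain ⟨k, hk'⟩ : ∃ k, Nat.find hex = k + 1 := ⟨Nat.find hex - 1, by omega⟩
    have hmin := Nat.find_min hex (show k < Nat.find hex by omega)
    rw [hk'] at hm
    refine ⟨k, ?_⟩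
    rw [alphaB, Nat.unpair_pair]
    simp only [Bool.and_eq_true, Bool.not_eq_true']
    exact ⟨hm, by simpa using hmin⟩
  · rintro ⟨k, hk⟩
    rw [alphaB, Nat.unpair_pair, Bool.and_eq_true] at hk
    obtain ⟨x, hx⟩ := Option.isSome_iff_exists.mp hk.1
    exact Part.dom_iff_mem.mpr ⟨x, evaln_sound hx⟩

theorem kappa_cases (x : ℕ) :
    (x % 2 = 0 ∧ kappa c x = 3 * (x / 2)) ∨
    (x % 2 = 1 ∧ alphaB c (x / 2) = true ∧ kappa c x = 3 * (x / 2).unpair.1 + 1) ∨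
    (x % 2 = 1 ∧ alphaB c (x / 2) = false ∧ kappa c x = 3 * (x / 2) + 2) := by
  unfold kappa
  rcases Nat.mod_two_eq_zero_or_one x with h | h
  · exact Or.inl ⟨h, by rw [if_pos h]⟩
  · rw [if_neg (by omega)]
    cases hb : alphaB c (x / 2)
    · exact Or.inr (Or.inr ⟨h, rfl, by rw [if_neg (by simp)]⟩)
    · exact Or.inr (Or.inl ⟨h, rfl, by rw [if_pos rfl]⟩)

theorem kappa_injective : Function.Injective (kappa c) := by
  intro x y h
  rcases kappa_cases c x with ⟨hx, ex⟩ | ⟨hx, ax, ex⟩ | ⟨hx, ax, ex⟩ <;>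
    rcases kappa_cases c y with ⟨hy, ey⟩ | ⟨hy, ay, ey⟩ | ⟨hy, ay, ey⟩ <;>
    rw [ex, ey] at h
  · omega
  · omega
  · omega
  · omega
  · have h1 : (x / 2).unpair.1 = (y / 2).unpair.1 := by omega
    have h2 := alphaB_unique c ax ay h1
    omega
  · omega
  · omega
  · omega
  · omega

theorem kappa_two_mul (a : ℕ) : kappa c (2 * a) = 3 * a := by
  unfold kappa
  rw [if_pos (by omega)]
  omega

theorem kappa_odd (s : ℕ) :
    kappa c (2 * s + 1) = if alphaB c s then 3 * s.unpair.1 + 1 else 3 * s + 2 := by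
  unfold kappa
  rw [if_neg (by omega)]
  have h : (2 * s + 1) / 2 = s := by omega
  rw [h]

theorem kappa_eFun (a : ℕ) :
    kappa c (eFun c a) = if alphaB c a then 3 * a + 3 else 3 * a + 2 := by
  unfold eFun
  cases hb : alphaB c a
  · rw [if_neg (by simp [hb]), if_neg (by simp [hb]), kappa_odd, if_neg (by simp [hb])]
  · rw [if_pos (by simp [hb]), if_pos (by simp [hb]), kappa_two_mul]
    omega

theorem no_one (a z : ℕ) (h : ¬(eval c a).Dom) : kappa c z ≠ 3 * a + 1 := by
  intro hz
  rcases kappa_cases c z with ⟨_, e⟩ | ⟨_, az, e⟩ | ⟨_, _, e⟩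
  · omega
  · have h1 : (z / 2).unpair.1 = a := by omega
    refine h ((dom_iff c a).mpr ⟨(z / 2).unpair.2, ?_⟩)
    have h2 : Nat.pair a (z / 2).unpair.2 = z / 2 := by
      rw [← h1]; exact Nat.pair_unpair _
    rw [h2]
    exact az
  · omega

theorem immSucc_notin (a : ℕ) (h : ¬(eval c a).Dom) :
    ImmSucc (fun x y => kappa c x < kappa c y) (2 * a) (eFun c a) := by
  have he := kappa_eFun c a
  constructor
  · show kappa c (2 * a) < kappa c (eFun c a)
    rw [kappa_two_mul]
    split at he <;> omega
  · rintro z ⟨h1, h2⟩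
    replace h1 : kappa c (2 * a) < kappa c z := h1
    replace h2 : kappa c z < kappa c (eFun c a) := h2
    rw [kappa_two_mul] at h1
    have hne := no_one c a z h
    split at he
    case isTrue hb =>
      rcases kappa_cases c z with ⟨_, e⟩ | ⟨_, _, e⟩ | ⟨_, az, e⟩
      · omega
      · omega
      · have hza : z / 2 = a := by omega
        rw [hza] at az
        rw [az] at hb
        exact absurd hb (by simp)
    case isFalse hb => omega

theorem immSucc_in (a : ℕ) (h : (eval c a).Dom) :
    ∃ y, ImmSucc (fun x y => kappa c x < kappa c y) (2 * a) y ∧ y ≠ eFun c a := by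
  obtain ⟨k, hk⟩ := (dom_iff c a).mp h
  have hy : kappa c (2 * Nat.pair a k + 1) = 3 * a + 1 := by
    rw [kappa_odd, if_pos hk, Nat.unpair_pair]
  refine ⟨2 * Nat.pair a k + 1, ⟨?_, ?_⟩, ?_⟩
  · show kappa c (2 * a) < kappa c (2 * Nat.pair a k + 1)
    rw [kappa_two_mul, hy]; omega
  · rintro z ⟨h1, h2⟩
    replace h1 : kappa c (2 * a) < kappa c z := h1
    replace h2 : kappa c z < kappa c (2 * Nat.pair a k + 1) := h2
    rw [kappa_two_mul] at h1
    rw [hy] at h2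
    omega
  · intro he
    unfold eFun at he
    split at he
    case isTrue => omega
    case isFalse hb =>
      have hpk : Nat.pair a k = a := by omega
      rw [hpk] at hk
      exact hb hk

theorem immSucc_unique {x y y' : ℕ}
    (h : ImmSucc (fun a b => kappa c a < kappa c b) x y)
    (h' : ImmSucc (fun a b => kappa c a < kappa c b) x y') : y = y' := by
  rcases lt_trichotomy (kappa c y) (kappa c y') with hlt | heq | hlt
  · exact absurd ⟨h.1, hlt⟩ (h'.2 y)
  · exact kappa_injective c heq
  · exact absurd ⟨h'.1, hlt⟩ (h.2 y')

theorem charSucc (S : ℕ → ℕ)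
    (hS : ∀ n, ImmSucc (fun a b => kappa c a < kappa c b) n (S n)) (a : ℕ) :
    (eval c a).Dom ↔ S (2 * a) ≠ eFun c a := by
  constructor
  · intro h
    obtain ⟨y, hy, hne⟩ := immSucc_in c a h
    rw [immSucc_unique c (hS (2 * a)) hy]
    exact hne
  · intro h
    by_contra hnd
    exact h (immSucc_unique c (hS (2 * a)) (immSucc_notin c a hnd))

theorem alphaB_primrec : Primrec (alphaB c) := by
  have h1 : Primrec fun s : ℕ => evaln (s.unpair.2 + 1) c s.unpair.1 :=
    primrec_evaln.comp
      (((Primrec.succ.comp (Primrec.snd.comp Primrec.unpair)).pair (Primrec.const c)).pair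
        (Primrec.fst.comp Primrec.unpair))
  have h2 : Primrec fun s : ℕ => evaln s.unpair.2 c s.unpair.1 :=
    primrec_evaln.comp
      (((Primrec.snd.comp Primrec.unpair).pair (Primrec.const c)).pair
        (Primrec.fst.comp Primrec.unpair))
  exact Primrec.and.comp (Primrec.option_isSome.comp h1)
    (Primrec.not.comp (Primrec.option_isSome.comp h2))

theorem kappa_primrec : Primrec (kappa c) := by
  have hdiv : Primrec fun x : ℕ => x / 2 := Primrec.nat_div.comp Primrec.id (Primrec.const 2)
  have hc1 : PrimrecPred fun x : ℕ => x % 2 = 0 :=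
    Primrec.eq.comp (Primrec.nat_mod.comp Primrec.id (Primrec.const 2)) (Primrec.const 0)
  have hc2 : PrimrecPred fun x : ℕ => alphaB c (x / 2) = true :=
    Primrec.eq.comp ((alphaB_primrec c).comp hdiv) (Primrec.const true)
  exact Primrec.ite hc1 (Primrec.nat_mul.comp (Primrec.const 3) hdiv)
    (Primrec.ite hc2
      (Primrec.nat_add.comp
        (Primrec.nat_mul.comp (Primrec.const 3) (Primrec.fst.comp (Primrec.unpair.comp hdiv)))
        (Primrec.const 1))
      (Primrec.nat_add.comp (Primrec.nat_mul.comp (Primrec.const 3) hdiv) (Primrec.const 2)))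

theorem eFun_primrec : Primrec (eFun c) :=
  Primrec.ite (Primrec.eq.comp (alphaB_primrec c) (Primrec.const true))
    (Primrec.nat_mul.comp (Primrec.const 2) Primrec.succ)
    (Primrec.nat_add.comp (Primrec.nat_mul.comp (Primrec.const 2) Primrec.id) (Primrec.const 1))

theorem strictTotal : IsStrictTotalOrder ℕ (fun x y => kappa c x < kappa c y) where
  trichotomous x y := by
    intro h1 h2
    rcases lt_trichotomy (kappa c x) (kappa c y) with h | h | h
    · exact absurd h h1
    · exact kappa_injective c h
    · exact absurd h h2
  irrefl x := lt_irrefl _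
  trans x y z := Nat.lt_trans

theorem omegaType : OrderTypeOmega (fun x y : ℕ => kappa c x < kappa c y) := by
  have hinj := kappa_injective c
  have hinf : (Set.range (kappa c)).Infinite := Set.infinite_range_of_injective hinj
  haveI := hinf.to_subtype
  let o := Nat.Subtype.orderIsoOfNat (Set.range (kappa c))
  refine ⟨RelIso.mk ((Equiv.ofInjective _ hinj).trans o.symm.toEquiv) ?_⟩
  intro x y
  show o.symm _ < o.symm _ ↔ _
  rw [o.symm.lt_iff_lt]
  exact Subtype.mk_lt_mk

/-- The diagonal-at-0 halting set. -/
def K0 : Set ℕ := {m | (eval (Denumerable.ofNat Nat.Partrec.Code m) 0).Dom}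

theorem K0_ce : CESet K0 :=
  ⟨fun m => eval (Denumerable.ofNat Nat.Partrec.Code m) 0,
    eval_part.comp (Computable.ofNat _) (Computable.const 0), rfl⟩

theorem K0_not_computable : ¬ ComputableSet K0 := by
  rintro ⟨g, hg, hgiff⟩
  apply ComputablePred.halting_problem 0
  rw [ComputablePred.computable_iff]
  refine ⟨fun cc => g (Encodable.encode cc), hg.comp Computable.encode, ?_⟩
  funext cc
  have h := hgiff (Encodable.encode cc)
  simp only [K0, Set.mem_setOf_eq, Denumerable.ofNat_encode] at h
  exact propext h

end OmegaSuccAux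

open OmegaSuccAux in

/-- There is a computable linear order of type ω whose successor function is not
computable; moreover, for every noncomputable c.e. set `A`, such an order can be chosen
so that membership in `A` is decided by the successor function (via computable
functions `c` and `e`: `a ∈ A` iff the successor of the element `c a` coding `a` is not
the expected value `e a`). -/
theorem exists_omega_order_noncomputable_succ :
    (∃ r : ℕ → ℕ → Prop, ComputableRel r ∧ IsStrictTotalOrder ℕ r ∧ OrderTypeOmega r ∧
      ¬ ∃ S : ℕ → ℕ, Computable S ∧ ∀ n, ImmSucc r n (S n)) ∧
    ∀ A : Set ℕ, CESet A → ¬ ComputableSet A →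
      ∃ r : ℕ → ℕ → Prop, ComputableRel r ∧ IsStrictTotalOrder ℕ r ∧ OrderTypeOmega r ∧
        (¬ ∃ S : ℕ → ℕ, Computable S ∧ ∀ n, ImmSucc r n (S n)) ∧
        ∃ c e : ℕ → ℕ, Computable c ∧ Computable e ∧
          ∀ S : ℕ → ℕ, (∀ n, ImmSucc r n (S n)) →
            ∀ a : ℕ, a ∈ A ↔ S (c a) ≠ e a := by
  
  have main : ∀ A : Set ℕ, CESet A → ¬ ComputableSet A →
      ∃ r : ℕ → ℕ → Prop, ComputableRel r ∧ IsStrictTotalOrder ℕ r ∧ OrderTypeOmega r ∧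
        (¬ ∃ S : ℕ → ℕ, Computable S ∧ ∀ n, ImmSucc r n (S n)) ∧
        ∃ c e : ℕ → ℕ, Computable c ∧ Computable e ∧
          ∀ S : ℕ → ℕ, (∀ n, ImmSucc r n (S n)) →
            ∀ a : ℕ, a ∈ A ↔ S (c a) ≠ e a := by
    intro A hA hnc
    obtain ⟨f, hf, rfl⟩ := hA
    obtain ⟨c, rfl⟩ := Nat.Partrec.Code.exists_code.mp (Partrec.nat_iff.mp hf)
    have hmem : ∀ n, n ∈ PFun.Dom (Nat.Partrec.Code.eval c) ↔ (Nat.Partrec.Code.eval c n).Dom :=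
      fun n => Iff.rfl
    have hcomp2 : Computable₂ fun x y : ℕ => decide (kappa c x < kappa c y) :=
      Primrec₂.to_comp (f := fun x y : ℕ => decide (kappa c x < kappa c y))
        (Primrec.nat_lt.comp ((kappa_primrec c).comp Primrec.fst)
          ((kappa_primrec c).comp Primrec.snd)).decide
    have hdouble : Computable fun a : ℕ => 2 * a :=
      (Primrec.nat_mul.comp (Primrec.const 2) Primrec.id).to_comp
    refine ⟨fun x y => kappa c x < kappa c y,
      ⟨fun x y => decide (kappa c x < kappa c y), hcomp2, fun m n => by simp⟩,
      strictTotal c, omegaType c, ?_, fun a => 2 * a, eFun c, hdouble,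
      (eFun_primrec c).to_comp, ?_⟩
    · rintro ⟨S, hSc, hS⟩
      apply hnc
      refine ⟨fun a => !decide (S (2 * a) = eFun c a), ?_, ?_⟩
      · exact Primrec.not.to_comp.comp
          (((Primrec.eq (α := ℕ)).decide.to_comp).comp (hSc.comp hdouble) (eFun_primrec c).to_comp)
      · intro n
        rw [hmem n, charSucc c S hS n]
        simp
    · intro S hS a
      rw [hmem a, charSucc c S hS a]
  exact ⟨by
    obtain ⟨r, h1, h2, h3, h4, _⟩ := main K0 K0_ce K0_not_computable
    exact ⟨r, h1, h2, h3, h4⟩, main⟩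
end

section
/- Let C ⊆ ℕ be a cohesive set, let φ : ℕ →. ℕ be a partial computable function with C ⊆* dom(φ), and let W ⊆ ℕ be a computably enumerable set. Then either for all but finitely many n ∈ C, φ(n)↓ and φ(n) ∈ W, or for all but finitely many n ∈ C, φ(n)↓ and φ(n) ∉ W. -/
/-- If `C` is cohesive, `φ` is partial computable with `C ⊆* dom(φ)`, and `W` is c.e.,
then either `φ(n)↓ ∈ W` for almost all `n ∈ C`, or `φ(n)↓ ∉ W` for almost all
`n ∈ C`. -/
theorem cohesive_partial_computable_dichotomy (C : Set ℕ) (hC : Cohesive C)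
    (φ : ℕ →. ℕ) (hφ : Partrec φ) (hdom : (C \ φ.Dom).Finite)
    (W : Set ℕ) (hW : CESet W) :
    {n | n ∈ C ∧ ¬ ∃ a, a ∈ φ n ∧ a ∈ W}.Finite ∨
    {n | n ∈ C ∧ ¬ ∃ a, a ∈ φ n ∧ a ∉ W}.Finite := by
  obtain ⟨g, hg, rfl⟩ := hW
  set f : ℕ →. ℕ := fun n => (φ n).bind g with hf
  have hfrec : Partrec f := hφ.bind ((hg.comp Computable.snd).to₂)
  set V : Set ℕ := f.Dom with hV
  have hVce : CESet V := ⟨f, hfrec, rfl⟩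
  have hmem : ∀ n, n ∈ V ↔ ∃ a, a ∈ φ n ∧ a ∈ g.Dom := by
    intro n
    simp [hV, hf, PFun.Dom, Part.dom_iff_mem, Part.bind_eq_bind, Part.mem_bind_iff,
      PFun.mem_dom]
    constructor
    · rintro ⟨y, hy⟩
      obtain ⟨a, ha, hy⟩ := Part.mem_bind_iff.mp hy
      exact ⟨a, ha, y, hy⟩
    · rintro ⟨a, ha, y, hy⟩
      exact ⟨y, Part.mem_bind ha hy⟩
  rcases hC.2 V hVce with h | h
  · right
    have : {n | n ∈ C ∧ ¬ ∃ a, a ∈ φ n ∧ a ∉ g.Dom} ⊆ (V ∩ C) ∪ (C \ φ.Dom) := by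
      intro n ⟨hnC, hn⟩
      by_cases hd : (φ n).Dom
      · obtain ⟨a, ha⟩ := Part.dom_iff_mem.mp hd
        left
        refine ⟨(hmem n).mpr ⟨a, ha, ?_⟩, hnC⟩
        by_contra hna; exact hn ⟨a, ha, hna⟩
      · exact Or.inr ⟨hnC, hd⟩
    exact (h.union hdom).subset this
  · left
    have : {n | n ∈ C ∧ ¬ ∃ a, a ∈ φ n ∧ a ∈ g.Dom} ⊆ Vᶜ ∩ C := by
      intro n ⟨hnC, hn⟩
      exact ⟨fun hv => hn ((hmem n).mp hv), hnC⟩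
    exact h.subset this
end
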